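/- In the language of rings {+, ·, 0, 1}, the theory of algebraically closed fields is model complete: if K ⊆ L are algebraically closed fields, then K is an elementary substructure of L. -/

import Mathlib

open FirstOrder Language Cardinal FirstOrder.Ring FirstOrder.Field

universe u v w

namespace ACFmc


theorem ringEquiv_over {A : Type*} [Field A] {M : Type*} {N : Type*}
    [Field M] [Field N] [Algebra A M] [Algebra A N] [IsAlgClosed M] [IsAlgClosed N]
    {ι κ' : Type*} {v : ι → M} {w : κ' → N} (e : ι ≃ κ')
    (hv : IsTranscendenceBasis A v) (hw : IsTranscendenceBasis A w) :
    ∃ E : M ≃+* N, ∀ a : A, E (algebraMap A M a) = algebraMap A N a := by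
  letI := IsAlgClosed.isAlgClosure_of_transcendence_basis v hv
  letI := IsAlgClosed.isAlgClosure_of_transcendence_basis w hw
  haveI : Module.IsTorsionFree (Algebra.adjoin A (Set.range v)) M :=
    Module.isTorsionFree_iff_algebraMap_injective.2 Subtype.val_injective
  haveI : Module.IsTorsionFree (Algebra.adjoin A (Set.range w)) N :=
    Module.isTorsionFree_iff_algebraMap_injective.2 Subtype.val_injective
  let e' : Algebra.adjoin A (Set.range v) ≃ₐ[A] Algebra.adjoin A (Set.range w) :=
    hv.1.aevalEquiv.symm.trans ((MvPolynomial.renameEquiv A e).trans hw.1.aevalEquiv)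
  refine ⟨IsAlgClosure.equivOfEquiv M N e'.toRingEquiv, fun a => ?_⟩
  rw [IsScalarTower.algebraMap_apply A (Algebra.adjoin A (Set.range v)) M a,
    IsAlgClosure.equivOfEquiv_algebraMap]
  show algebraMap _ N (e' (algebraMap A _ a)) = _
  rw [e'.commutes, ← IsScalarTower.algebraMap_apply]

theorem basis_card {A M : Type w} [Field A] [Field M] [Algebra A M] [IsAlgClosed M]
    {ι : Type w} {v : ι → M} (hs : IsTranscendenceBasis A v)
    (hbig : ℵ₀ < #M) (hA : #A < #M) : #ι = #M := by
  refine le_antisymm (mk_le_of_injective hs.1.injective) (le_of_not_gt fun h => ?_)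
  have h2 := IsAlgClosed.cardinal_le_max_transcendence_basis' _ hs
  exact absurd h2 (not_le_of_gt (by
    refine lt_of_le_of_lt ?_ (max_lt (max_lt hA h) hbig)
    exact le_rfl))

theorem isAlgClosed_ulift {K : Type u} [Field K] [IsAlgClosed K] :
    IsAlgClosed (ULift.{v} K) := by
  apply IsAlgClosed.of_exists_root
  intro p hmonic hirr
  obtain ⟨x, hx⟩ := IsAlgClosed.exists_root
    (p.map (ULift.ringEquiv : ULift.{v} K ≃+* K).toRingHom) (by
      rw [Polynomial.degree_map]
      exact fun h0 => hirr.not_isUnit (Polynomial.isUnit_iff_degree_eq_zero.2 h0))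
  refine ⟨(ULift.ringEquiv : ULift.{v} K ≃+* K).symm x, ?_⟩
  have := hx
  rw [Polynomial.IsRoot, Polynomial.eval_map] at this
  have hx' : x = (ULift.ringEquiv : ULift.{v} K ≃+* K).toRingHom
      ((ULift.ringEquiv : ULift.{v} K ≃+* K).symm x) := by simp
  rw [hx', Polynomial.eval₂_at_apply] at this
  exact (map_eq_zero _).1 this



variable (K : Type*) [Field K]

/-- The term for the constant of `a : K`. -/
noncomputable abbrev conT (a : K) : (ring[[K]]).Term Empty :=
  Constants.term (Language.con ring a)

noncomputable def addSen (a b : K) : (ring[[K]]).Sentence :=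
  Term.equal (conT K (a + b)) (Functions.apply₂ (Sum.inl addFunc) (conT K a) (conT K b))

noncomputable def mulSen (a b : K) : (ring[[K]]).Sentence :=
  Term.equal (conT K (a * b)) (Functions.apply₂ (Sum.inl mulFunc) (conT K a) (conT K b))

noncomputable def oneSen : (ring[[K]]).Sentence :=
  Term.equal (conT K 1) (Constants.term (Sum.inl oneFunc))

noncomputable def diag : (ring[[K]]).Theory :=
  {oneSen K} ∪ ⋃ (a : K) (b : K), {addSen K a b, mulSen K a b}

/-- The interpretation of the constant for `a` in `M`. -/
noncomputable def conM (M : Type*) [(ring[[K]]).Structure M] (a : K) : M :=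
  Structure.funMap (Language.con ring a : (ring[[K]]).Constants) default

variable {K}

section Realize

variable {M : Type*} [(ring[[K]]).Structure M]

theorem realize_conT {a : K} {v : Empty → M} :
    Term.realize v (conT K a) = conM K M a := by
  simp [conT, conM, Term.realize_constants]
  rfl

theorem realize_addSen {a b : K} :
    M ⊨ addSen K a b ↔
      conM K M (a + b) = Structure.funMap (L := ring[[K]]) (Sum.inl addFunc)
        ![conM K M a, conM K M b] := by
  simp only [addSen, Sentence.Realize, Formula.realize_equal]
  erw [Term.realize_functions_apply₂]
  simp only [Term.realize_functions_apply₂,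
    realize_conT]

theorem realize_mulSen {a b : K} :
    M ⊨ mulSen K a b ↔
      conM K M (a * b) = Structure.funMap (L := ring[[K]]) (Sum.inl mulFunc)
        ![conM K M a, conM K M b] := by
  simp only [mulSen, Sentence.Realize, Formula.realize_equal]
  erw [Term.realize_functions_apply₂]
  simp only [Term.realize_functions_apply₂,
    realize_conT]

theorem realize_oneSen :
    M ⊨ oneSen K ↔
      conM K M 1 = Structure.funMap (L := ring[[K]]) (Sum.inl oneFunc) default := by
  simp only [oneSen, Sentence.Realize, Formula.realize_equal, realize_conT,
    Term.realize_constants]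
  erw [Term.realize_constants]
  rfl

end Realize

section RingHom

variable {M : Type*} [Add M] [Mul M] [Neg M] [One M] [Zero M] [CompatibleRing M]
  [(ring[[K]]).Structure M] [(lhomWithConstants ring K).IsExpansionOn M]

theorem funMap_inl_add (x : Fin 2 → M) :
    Structure.funMap (L := ring[[K]]) (Sum.inl addFunc) x = x 0 + x 1 := by
  rw [show (Sum.inl addFunc) =
    (lhomWithConstants ring K).onFunction addFunc from rfl,
    LHom.IsExpansionOn.map_onFunction, CompatibleRing.funMap_add]

theorem funMap_inl_mul (x : Fin 2 → M) :
    Structure.funMap (L := ring[[K]]) (Sum.inl mulFunc) x = x 0 * x 1 := by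
  rw [show (Sum.inl mulFunc) =
    (lhomWithConstants ring K).onFunction mulFunc from rfl,
    LHom.IsExpansionOn.map_onFunction, CompatibleRing.funMap_mul]

theorem funMap_inl_one :
    Structure.funMap (L := ring[[K]]) (Sum.inl oneFunc) (default : Fin 0 → M) = 1 := by
  rw [show (Sum.inl oneFunc) =
    (lhomWithConstants ring K).onFunction oneFunc from rfl,
    LHom.IsExpansionOn.map_onFunction, CompatibleRing.funMap_one]

end RingHom

section RingHomOfDiag

variable {M : Type*} [CommRing M] [CompatibleRing M]
  [(ring[[K]]).Structure M] [(lhomWithConstants ring K).IsExpansionOn M]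

/-- From a model of the diagram of `K`, the constants give a ring hom `K →+* M`. -/
theorem ringHom_of_diag (h : M ⊨ diag K) :
    ∃ g : K →+* M, ∀ a : K, g a = conM K M a := by
  have h' := (Theory.model_iff (diag K) (M := M)).1 h
  have hone : M ⊨ oneSen K := h' _ (Or.inl rfl)
  have hadd : ∀ a b : K, M ⊨ addSen K a b := fun a b =>
    h' _ (Or.inr (Set.mem_iUnion.2 ⟨a, Set.mem_iUnion.2 ⟨b, Or.inl rfl⟩⟩))
  have hmul : ∀ a b : K, M ⊨ mulSen K a b := fun a b =>
    h' _ (Or.inr (Set.mem_iUnion.2 ⟨a, Set.mem_iUnion.2 ⟨b, Or.inr rfl⟩⟩))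
  have hone' : conM K M 1 = 1 := by
    rw [realize_oneSen.1 hone, funMap_inl_one (K := K) (M := M)]
  have hadd' : ∀ a b : K, conM K M (a + b) = conM K M a + conM K M b := fun a b => by
    rw [realize_addSen.1 (hadd a b), funMap_inl_add]; simp
  have hmul' : ∀ a b : K, conM K M (a * b) = conM K M a * conM K M b := fun a b => by
    rw [realize_mulSen.1 (hmul a b), funMap_inl_mul]; simp
  exact ⟨RingHom.mk' ⟨⟨fun a => conM K M a, hone'⟩, hmul'⟩ hadd', fun a => rfl⟩

end RingHomOfDiag


theorem model_diag {K : Type*} [Field K] {M : Type*} [CommRing M] [CompatibleRing M]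
    [(ring[[K]]).Structure M] [(lhomWithConstants ring K).IsExpansionOn M]
    (g : K →+* M) (hg : ∀ a : K, conM K M a = g a) : M ⊨ diag K := by
  rw [Theory.model_iff]
  intro φ hφ
  simp only [diag, Set.mem_union, Set.mem_singleton_iff, Set.mem_iUnion,
    Set.mem_insert_iff] at hφ
  rcases hφ with rfl | ⟨a, b, rfl | rfl⟩
  · rw [realize_oneSen, funMap_inl_one (K := K) (M := M), hg, map_one]
  · rw [realize_addSen, funMap_inl_add]
    simp [hg, map_add]
  · rw [realize_mulSen, funMap_inl_mul]
    simp [hg, map_mul]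

theorem iso_of_models {A M N : Type w} [Field A]
    [(ring[[A]]).Structure M] [(ring[[A]]).Structure N] {p : ℕ}
    (hMACF : M ⊨ (lhomWithConstants ring A).onTheory (Theory.ACF p))
    (hNACF : N ⊨ (lhomWithConstants ring A).onTheory (Theory.ACF p))
    (hMdiag : M ⊨ diag A) (hNdiag : N ⊨ diag A)
    (hbig : ℵ₀ < #M) (hAcard : #A < #M) (hcard : #M = #N) :
    Nonempty (M ≃[ring[[A]]] N) := by
  letI rM : ring.Structure M := (lhomWithConstants ring A).reduct M
  letI rN : ring.Structure N := (lhomWithConstants ring A).reduct N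
  haveI : (lhomWithConstants ring A).IsExpansionOn M :=
    LHom.isExpansionOn_reduct (lhomWithConstants ring A) M
  haveI : (lhomWithConstants ring A).IsExpansionOn N :=
    LHom.isExpansionOn_reduct (lhomWithConstants ring A) N
  haveI hM1 : M ⊨ Theory.ACF p := ((lhomWithConstants ring A).onTheory_model _).1 hMACF
  haveI hN1 : N ⊨ Theory.ACF p := ((lhomWithConstants ring A).onTheory_model _).1 hNACF
  letI : Field M := fieldOfModelACF p M
  haveI := modelField_of_modelACF p M
  letI : CompatibleRing M := compatibleRingOfModelField M
  haveI : IsAlgClosed M := isAlgClosed_of_model_ACF p M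
  letI : Field N := fieldOfModelACF p N
  haveI := modelField_of_modelACF p N
  letI : CompatibleRing N := compatibleRingOfModelField N
  haveI : IsAlgClosed N := isAlgClosed_of_model_ACF p N
  obtain ⟨gM, hgM⟩ := ringHom_of_diag hMdiag
  obtain ⟨gN, hgN⟩ := ringHom_of_diag hNdiag
  letI : Algebra A M := gM.toAlgebra
  letI : Algebra A N := gN.toAlgebra
  obtain ⟨s, hs⟩ := exists_isTranscendenceBasis A M
  obtain ⟨t, ht⟩ := exists_isTranscendenceBasis A N
  have hsM : #s = #M := basis_card hs hbig hAcard
  have htN : #t = #N := basis_card ht (hcard ▸ hbig) (hcard ▸ hAcard)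
  obtain ⟨e⟩ := Cardinal.eq.1 (hsM.trans (hcard.trans htN.symm))
  obtain ⟨E, hE⟩ := ringEquiv_over e hs ht
  let E' : M ≃[ring] N := languageEquivEquivRingEquiv.symm E
  refine ⟨⟨E.toEquiv, ?_, ?_⟩⟩
  · rintro n (fsym | csym) x
    · exact E'.map_fun' fsym x
    · cases n with
      | zero =>
        have h1 : ∀ y : Fin 0 → M,
            Structure.funMap (L := ring[[A]]) (Sum.inr csym) y = conM A M csym := fun y => by
          unfold conM; congr 1; exact Subsingleton.elim _ _
        have h2 : ∀ y : Fin 0 → N,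
            Structure.funMap (L := ring[[A]]) (Sum.inr csym) y = conM A N csym := fun y => by
          unfold conM; congr 1; exact Subsingleton.elim _ _
        rw [h1, h2]
        exact (congrArg E (hgM csym)).symm.trans ((hE csym).trans (hgN csym))
      | succ n => exact csym.elim
  · rintro n (r | r) x
    · exact r.elim
    · exact r.elim

theorem key (A B : Type w) [Field A] [Field B] [IsAlgClosed A] [IsAlgClosed B]
    [CompatibleRing A] [CompatibleRing B]
    [(constantsOn A).Structure A] [(constantsOn A).Structure B]
    (f : A →+* B)
    (hA : ∀ a : A, conM A A a = a) (hB : ∀ a : A, conM A B a = f a)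
    (ψ : (ring[[A]]).Sentence) : A ⊨ ψ ↔ B ⊨ ψ := by
  have hpA : CharP A (ringChar A) := ringChar.charP A
  letI : Algebra A B := f.toAlgebra
  haveI : CharP B (ringChar A) := charP_of_injective_ringHom f.injective _
  haveI hACFA : A ⊨ Theory.ACF (ringChar A) := inferInstance
  haveI hACFB : B ⊨ Theory.ACF (ringChar A) := inferInstance
  haveI hA1 : A ⊨ (lhomWithConstants ring A).onTheory (Theory.ACF (ringChar A)) :=
    ((lhomWithConstants ring A).onTheory_model _).2 inferInstance
  haveI hB1 : B ⊨ (lhomWithConstants ring A).onTheory (Theory.ACF (ringChar A)) :=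
    ((lhomWithConstants ring A).onTheory_model _).2 inferInstance
  haveI hA2 : A ⊨ diag A := model_diag (RingHom.id A) (by simpa using hA)
  haveI hB2 : B ⊨ diag A := model_diag f hB
  set κ : Cardinal.{w} := Order.succ (#A ⊔ ℵ₀) with hκdef
  have hκ1 : ℵ₀ ≤ κ := le_of_lt (lt_of_le_of_lt le_sup_right (Order.lt_succ _))
  have hκA : #A < κ := lt_of_le_of_lt le_sup_left (Order.lt_succ _)
  have hcardL : lift.{w} (ring[[A]]).card ≤ lift.{w} κ := by
    rw [lift_le]
    refine le_trans ?_ (le_of_lt (Order.lt_succ _))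
    rw [card_withConstants, card_ring]
    simp only [lift_id']
    refine add_le_of_le (le_sup_right) ?_ ?_
    · refine le_trans (le_of_lt ?_) le_sup_right
      rw [lift_lt_aleph0]
      exact_mod_cast nat_lt_aleph0 5
    · exact le_sup_left
  obtain ⟨Mb, hAM, hMκ⟩ := exists_elementarilyEquivalent_card_eq (ring[[A]]) A κ hκ1 hcardL
  obtain ⟨Nb, hBN, hNκ⟩ := exists_elementarilyEquivalent_card_eq (ring[[A]]) B κ hκ1 hcardL
  obtain ⟨F⟩ := iso_of_models (A := A) (M := Mb) (N := Nb) (p := ringChar A)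
    (hAM.theory_model) (hBN.theory_model) (hAM.theory_model) (hBN.theory_model)
    (by rw [hMκ]; exact lt_of_le_of_lt le_sup_right (Order.lt_succ _))
    (by rw [hMκ]; exact hκA)
    (by rw [hMκ, hNκ])
  exact (hAM.realize_sentence ψ).trans
    ((StrongHomClass.realize_sentence F ψ).trans (hBN.realize_sentence ψ).symm)

theorem realize_substSen {K : Type*} [Field K] {M : Type*} [(ring[[K]]).Structure M]
    {n : ℕ} (φ : ring.Formula (Fin n)) (c : Fin n → K) :
    (M ⊨ (BoundedFormula.subst ((lhomWithConstants ring K).onFormula φ)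
        (fun i => conT K (c i)) : (ring[[K]]).Sentence)) ↔
      ((lhomWithConstants ring K).onFormula φ).Realize (fun i => conM K M (c i)) := by
  simp only [Sentence.Realize, Formula.Realize, BoundedFormula.realize_subst, realize_conT]

theorem main (K : Type u) (L : Type v) [Field K] [Field L]
    [IsAlgClosed K] [IsAlgClosed L] (f : K →+* L)
    (n : ℕ) (φ : Language.ring.Formula (Fin n)) (v' : Fin n → K) :
    letI := FirstOrder.Ring.compatibleRingOfRing K
    letI := FirstOrder.Ring.compatibleRingOfRing L
    (φ.Realize v' ↔ φ.Realize (f ∘ v')) := by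
  letI := FirstOrder.Ring.compatibleRingOfRing K
  letI := FirstOrder.Ring.compatibleRingOfRing L
  let A := ULift.{v} K
  let B := ULift.{u} L
  letI : CompatibleRing A := compatibleRingOfRing A
  letI : CompatibleRing B := compatibleRingOfRing B
  haveI : IsAlgClosed A := isAlgClosed_ulift
  haveI : IsAlgClosed B := isAlgClosed_ulift
  let eK : A ≃+* K := ULift.ringEquiv
  let eL : B ≃+* L := ULift.ringEquiv
  let f' : A →+* B := (eL.symm.toRingHom.comp f).comp eK.toRingHom
  letI : (constantsOn A).Structure A := constantsOn.structure id
  letI : (constantsOn A).Structure B := constantsOn.structure f'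
  have hA : ∀ a : A, conM A A a = a := fun a => rfl
  have hB : ∀ a : A, conM A B a = f' a := fun a => rfl
  let ψ : (ring[[A]]).Sentence :=
    BoundedFormula.subst ((lhomWithConstants ring A).onFormula φ)
      (fun i => conT A (ULift.up (v' i)))
  have h1 : (A ⊨ ψ) ↔ (B ⊨ ψ) := key A B f' hA hB ψ
  rw [realize_substSen, realize_substSen] at h1
  rw [LHom.realize_onFormula, LHom.realize_onFormula] at h1
  simp only [hA, hB] at h1
  -- h1 : φ.Realize (fun i => up (v' i)) [in A] ↔ φ.Realize (fun i => f' (up (v' i))) [in B]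
  have hKA : φ.Realize v' ↔ φ.Realize (fun i => (ULift.up (v' i) : A)) := by
    rw [← StrongHomClass.realize_formula (languageEquivEquivRingEquiv.symm eK)
      (φ := φ) (v := fun i => (ULift.up (v' i) : A))]
    constructor
    · intro h; convert h using 2; rfl
    · intro h; convert h using 2; rfl
  have hLB : φ.Realize (f ∘ v') ↔ φ.Realize (fun i => f' (ULift.up (v' i))) := by
    rw [← StrongHomClass.realize_formula (languageEquivEquivRingEquiv.symm eL)
      (φ := φ) (v := fun i => f' (ULift.up (v' i)))]
    constructor
    · intro h; convert h using 2; rfl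
    · intro h; convert h using 2; rfl
  rw [hKA, hLB]
  exact h1


end ACFmc

/-- Model completeness of ACF: if `K ⊆ L` (witnessed by a ring embedding) are
algebraically closed fields, then `K` is an elementary substructure of `L`:
every first-order formula in the language of rings with parameters in `K`
holds in `K` iff it holds in `L`. -/
theorem acf_model_complete (K L : Type*) [Field K] [Field L]
    [IsAlgClosed K] [IsAlgClosed L] (f : K →+* L) :
    letI := FirstOrder.Ring.compatibleRingOfRing K
    letI := FirstOrder.Ring.compatibleRingOfRing L
    ∀ (n : ℕ) (φ : Language.ring.Formula (Fin n)) (v : Fin n → K),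
      φ.Realize v ↔ φ.Realize (f ∘ v) := by
  intro n φ v
  exact ACFmc.main K L f n φ v
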